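/- arXiv:1211.4391 — 3 statements merged into one kernel-verified Lean document; each statement's English description precedes it below -/
import Mathlib

section
/- Classical Euler–Lagrange equations with time delay (necessary condition): suppose q ∈ C¹([t₁ - τ, t₂], ℝ^d) minimizes I[q] = ∫_{t₁}^{t₂} L(t, q(t), q̇(t), q(t-τ), q̇(t-τ)) dt over C¹ functions satisfying q(t) = δ(t) on [t₁ - τ, t₁] and q(t₂) = q₂, with L of class C¹ and the map t ↦ L_{q̇}[q]_τ(t) + L_{q̇_τ}[q]_τ(t+τ) of class C¹ on [t₁, t₂-τ] and t ↦ L_{q̇}[q]_τ(t) of class C¹ on [t₂-τ, t₂]. Then d/dt [L_{q̇}[q]_τ(t) + L_{q̇_τ}[q]_τ(t+τ)] = L_q[q]_τ(t) + L_{q_τ}[q]_τ(t+τ) for t₁ ≤ t ≤ t₂ - τ, and d/dt L_{q̇}[q]_τ(t) = L_q[q]_τ(t) for t₂ - τ ≤ t ≤ t₂. -/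
open Set intervalIntegral

open MeasureTheory in
lemma el_nonneg_zero {a b : ℝ} {g : ℝ → ℝ} (hg : Continuous g)
    (hg0 : ∀ t, 0 ≤ g t) (hab : a ≤ b) (hint : (∫ t in a..b, g t) = 0) :
    ∀ t ∈ Set.Ioo a b, g t = 0 := by
  intro t₀ ht₀
  by_contra hne
  have hpos : 0 < g t₀ := lt_of_le_of_ne (hg0 t₀) (Ne.symm hne)
  have hev : ∀ᶠ s in nhds t₀, g t₀ / 2 < g s :=
    (hg.continuousAt (x := t₀)).eventually_const_lt (by linarith)
  obtain ⟨r, hr, hball⟩ := Metric.eventually_nhds_iff.1 hev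
  set u := max a (t₀ - r / 2) with hu
  set w := min b (t₀ + r / 2) with hw
  have huw : u < w := by
    simp only [hu, hw, lt_min_iff, max_lt_iff]
    refine ⟨⟨?_, ?_⟩, ?_, ?_⟩ <;> linarith [ht₀.1, ht₀.2]
  have hau : a ≤ u := le_max_left _ _
  have hwb : w ≤ b := min_le_left _ _
  have hposuw : ∀ x ∈ Set.Ioo u w, 0 < g x := by
    intro x hx
    have hx1 : t₀ - r / 2 < x := lt_of_le_of_lt (le_max_right _ _) hx.1
    have hx2 : x < t₀ + r / 2 := lt_of_lt_of_le hx.2 (min_le_right _ _)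
    have : dist x t₀ < r := by
      rw [Real.dist_eq]; rw [abs_lt]; constructor <;> linarith
    linarith [hball this]
  have hIuw : 0 < ∫ t in u..w, g t :=
    intervalIntegral_pos_of_pos_on ((hg.intervalIntegrable _ _)) hposuw huw
  have h1 : (0:ℝ) ≤ ∫ t in a..u, g t :=
    intervalIntegral.integral_nonneg hau (fun x _ => hg0 x)
  have h2 : (0:ℝ) ≤ ∫ t in w..b, g t :=
    intervalIntegral.integral_nonneg hwb (fun x _ => hg0 x)
  have hsplit : (∫ t in a..b, g t)
      = (∫ t in a..u, g t) + (∫ t in u..w, g t) + ∫ t in w..b, g t := by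
    rw [intervalIntegral.integral_add_adjacent_intervals (hg.intervalIntegrable _ _)
      (hg.intervalIntegrable _ _),
      intervalIntegral.integral_add_adjacent_intervals (hg.intervalIntegrable _ _)
      (hg.intervalIntegrable _ _)]
  rw [hsplit] at hint
  linarith

open MeasureTheory in
lemma el_key {a b : ℝ} (hab : a < b) {f F : ℝ → ℝ}
    (hf : Continuous f) (hF : Continuous F)
    (hFd : ∀ t ∈ Set.Icc a b, DifferentiableAt ℝ F t)
    (H : ∀ φ ψ : ℝ → ℝ, (∀ t, HasDerivAt φ (ψ t) t) → Continuous ψ →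
      (∀ t, t ∉ Set.Ioo a b → φ t = 0) → (∀ t, t ∉ Set.Ioo a b → ψ t = 0) →
      (∫ t in a..b, (f t * φ t + F t * ψ t)) = 0) :
    ∀ t ∈ Set.Icc a b, deriv F t = f t := by
  set G : ℝ → ℝ := fun t => ∫ s in a..t, f s with hGdef
  have hGd : ∀ t, HasDerivAt G (f t) t := fun t =>
    (hf.integral_hasStrictDerivAt a t).hasDerivAt
  have hGc : Continuous G := by
    rw [continuous_iff_continuousAt]; exact fun t => (hGd t).continuousAt
  set h : ℝ → ℝ := fun t => F t - G t with hhdef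
  have hhc : Continuous h := hF.sub hGc
  -- Step 1: for all admissible (φ, ψ), ∫ h ψ = 0
  have step1 : ∀ φ ψ : ℝ → ℝ, (∀ t, HasDerivAt φ (ψ t) t) → Continuous ψ →
      (∀ t, t ∉ Set.Ioo a b → φ t = 0) → (∀ t, t ∉ Set.Ioo a b → ψ t = 0) →
      (∫ t in a..b, h t * ψ t) = 0 := by
    intro φ ψ hφ hψ hφ0 hψ0
    have hφc : Continuous φ := by
      rw [continuous_iff_continuousAt]; exact fun t => (hφ t).continuousAt
    have hibp : (∫ t in a..b, (f t * φ t + G t * ψ t)) = G b * φ b - G a * φ a := by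
      apply intervalIntegral.integral_eq_sub_of_hasDerivAt
      · exact fun t _ => (hGd t).mul (hφ t)
      · exact ((hf.mul hφc).add (hGc.mul hψ)).intervalIntegrable _ _
    rw [hφ0 a (fun hc => lt_irrefl a hc.1), hφ0 b (fun hc => lt_irrefl b hc.2)] at hibp
    simp only [mul_zero, sub_zero] at hibp
    have hH := H φ ψ hφ hψ hφ0 hψ0
    have : (∫ t in a..b, h t * ψ t)
        = (∫ t in a..b, (f t * φ t + F t * ψ t))
          - ∫ t in a..b, (f t * φ t + G t * ψ t) := by
      rw [← intervalIntegral.integral_sub (f := fun t => f t * φ t + F t * ψ t)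
        (g := fun t => f t * φ t + G t * ψ t)
        (((hf.mul hφc).add (hF.mul hψ)).intervalIntegrable _ _)
        (((hf.mul hφc).add (hGc.mul hψ)).intervalIntegrable _ _)]
      congr 1; funext t; simp only [hhdef]; ring
    rw [this, hH, hibp, sub_zero]
  -- Step 2: h is constant on Ioo a b
  have step2 : ∀ x ∈ Set.Ioo a b, ∀ y ∈ Set.Ioo a b, h x = h y := by
    intro x hx y hy
    set u := (a + min x y) / 2 with hu
    set w := (max x y + b) / 2 with hw
    have hamin : a < min x y := lt_min hx.1 hy.1
    have hmaxb : max x y < b := max_lt hx.2 hy.2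
    have hau : a < u := by rw [hu]; linarith
    have humin : u < min x y := by rw [hu]; linarith
    have hmaxw : max x y < w := by rw [hw]; linarith
    have hwb : w < b := by rw [hw]; linarith
    have hxuw : x ∈ Set.Ioo u w :=
      ⟨lt_of_lt_of_le humin (min_le_left _ _), lt_of_le_of_lt (le_max_left _ _) hmaxw⟩
    have hyuw : y ∈ Set.Ioo u w :=
      ⟨lt_of_lt_of_le humin (min_le_right _ _), lt_of_le_of_lt (le_max_right _ _) hmaxw⟩
    set m : ℝ → ℝ := fun t => max 0 (min (t - u) (w - t)) with hm
    have hmc : Continuous m := by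
      apply continuous_const.max
      exact (continuous_id.sub continuous_const).min (continuous_const.sub continuous_id)
    have hm0 : ∀ t, 0 ≤ m t := fun t => le_max_left _ _
    have hmz : ∀ t, t ∉ Set.Ioo u w → m t = 0 := by
      intro t htn
      rw [Set.mem_Ioo, not_and_or, not_lt, not_lt] at htn
      rcases htn with h1 | h1
      · exact max_eq_left (le_trans (min_le_left _ _) (by linarith))
      · exact max_eq_left (le_trans (min_le_right _ _) (by linarith))
    have hmpos : ∀ t ∈ Set.Ioo u w, 0 < m t := by
      intro t htm
      have : 0 < min (t - u) (w - t) := lt_min (by linarith [htm.1]) (by linarith [htm.2])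
      rw [hm]; exact lt_max_of_lt_right this
    have hIm : 0 < ∫ t in a..b, m t := by
      have h1 : (0:ℝ) ≤ ∫ t in a..u, m t :=
        intervalIntegral.integral_nonneg hau.le (fun s _ => hm0 s)
      have h2 : (0:ℝ) ≤ ∫ t in w..b, m t :=
        intervalIntegral.integral_nonneg hwb.le (fun s _ => hm0 s)
      have h3 : 0 < ∫ t in u..w, m t :=
        intervalIntegral_pos_of_pos_on (hmc.intervalIntegrable _ _) hmpos (by linarith [inf_le_sup (a:=x) (b:=y)])
      have hsplit : (∫ t in a..b, m t)
          = (∫ t in a..u, m t) + (∫ t in u..w, m t) + ∫ t in w..b, m t := by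
        rw [intervalIntegral.integral_add_adjacent_intervals (hmc.intervalIntegrable _ _)
          (hmc.intervalIntegrable _ _),
          intervalIntegral.integral_add_adjacent_intervals (hmc.intervalIntegrable _ _)
          (hmc.intervalIntegrable _ _)]
      rw [hsplit]; linarith
    set c : ℝ := (∫ t in a..b, h t * m t) / (∫ t in a..b, m t) with hc
    set ψ : ℝ → ℝ := fun t => (h t - c) * m t with hψ
    have hψc : Continuous ψ := (hhc.sub continuous_const).mul hmc
    set φ : ℝ → ℝ := fun t => ∫ s in a..t, ψ s with hφ
    have hφψ : ∀ t, HasDerivAt φ (ψ t) t := fun t =>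
      (hψc.integral_hasStrictDerivAt a t).hasDerivAt
    have hψ0 : ∀ t, t ∉ Set.Ioo a b → ψ t = 0 := by
      intro t htn
      have : t ∉ Set.Ioo u w := fun hcon =>
        htn ⟨lt_trans hau hcon.1, lt_trans hcon.2 hwb⟩
      rw [hψ]; simp [hmz t this]
    have hintψ : (∫ t in a..b, ψ t) = 0 := by
      have : (∫ t in a..b, ψ t)
          = (∫ t in a..b, h t * m t) - c * ∫ t in a..b, m t := by
        rw [← intervalIntegral.integral_const_mul,
          ← intervalIntegral.integral_sub (f := fun t => h t * m t) (g := fun x => c * m x)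
            ((hhc.mul hmc).intervalIntegrable _ _)
            ((continuous_const.mul hmc).intervalIntegrable _ _)]
        congr 1; funext t; ring
      rw [this, hc, div_mul_cancel₀ _ (ne_of_gt hIm), sub_self]
    have hφ0 : ∀ t, t ∉ Set.Ioo a b → φ t = 0 := by
      intro t htn
      rw [Set.mem_Ioo, not_and_or, not_lt, not_lt] at htn
      rcases htn with h1 | h1
      · show (∫ s in a..t, ψ s) = 0
        have : (∫ s in a..t, ψ s) = ∫ s in a..t, (0:ℝ) := by
          apply intervalIntegral.integral_congr
          intro s hs
          rw [Set.uIcc_of_ge h1, Set.mem_Icc] at hs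
          exact hψ0 s (fun hcon => absurd (lt_of_lt_of_le hcon.1 hs.2) (lt_irrefl a))
        rw [this]; simp
      · have hsplit : (∫ s in a..b, ψ s) + (∫ s in b..t, ψ s) = ∫ s in a..t, ψ s :=
          intervalIntegral.integral_add_adjacent_intervals
            (hψc.intervalIntegrable _ _) (hψc.intervalIntegrable _ _)
        have hz : (∫ s in b..t, ψ s) = ∫ s in b..t, (0:ℝ) := by
          apply intervalIntegral.integral_congr
          intro s hs
          rw [Set.uIcc_of_le h1, Set.mem_Icc] at hs
          exact hψ0 s (fun hcon => absurd (lt_of_le_of_lt hs.1 hcon.2) (lt_irrefl b))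
        show (∫ s in a..t, ψ s) = 0
        rw [← hsplit, hintψ, hz]; simp
    have happ := step1 φ ψ hφψ hψc hφ0 hψ0
    have hsq : (∫ t in a..b, (h t - c) ^ 2 * m t) = 0 := by
      have : (∫ t in a..b, (h t - c) ^ 2 * m t)
          = (∫ t in a..b, h t * ψ t) - c * ∫ t in a..b, ψ t := by
        rw [← intervalIntegral.integral_const_mul,
          ← intervalIntegral.integral_sub (f := fun t => h t * ψ t) (g := fun x => c * ψ x)
            ((hhc.mul hψc).intervalIntegrable _ _)
            ((continuous_const.mul hψc).intervalIntegrable _ _)]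
        congr 1; funext t; rw [hψ]; ring
      rw [this, happ, hintψ, mul_zero, sub_zero]
    have hzero := el_nonneg_zero (g := fun t => (h t - c) ^ 2 * m t)
      (((hhc.sub continuous_const).pow 2).mul hmc)
      (fun t => mul_nonneg (sq_nonneg _) (hm0 t)) hab.le hsq
    have hxc : h x = c := by
      have := hzero x hx
      rcases mul_eq_zero.1 this with h1 | h1
      · have := sq_eq_zero_iff.1 h1; linarith [this]
      · exact absurd h1 (ne_of_gt (hmpos x hxuw))
    have hyc : h y = c := by
      have := hzero y hy
      rcases mul_eq_zero.1 this with h1 | h1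
      · have := sq_eq_zero_iff.1 h1; linarith [this]
      · exact absurd h1 (ne_of_gt (hmpos y hyuw))
    rw [hxc, hyc]
  -- Step 3: h is constant on Icc a b
  set K : ℝ := h ((a + b) / 2) with hK
  have hmid : (a + b) / 2 ∈ Set.Ioo a b := ⟨by linarith, by linarith⟩
  have hconst : Set.EqOn h (fun _ => K) (Set.Icc a b) := by
    have h1 : Set.EqOn h (fun _ => K) (Set.Ioo a b) := fun s hs => step2 s hs _ hmid
    have h2 := h1.closure hhc continuous_const
    rw [closure_Ioo (ne_of_lt hab)] at h2
    exact h2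
  have hFG : ∀ s ∈ Set.Icc a b, F s = G s + K := by
    intro s hs
    have := hconst hs
    simp only [hhdef] at this
    linarith [this]
  -- Step 4: conclude
  intro t ht
  have h1 : HasDerivWithinAt F (deriv F t) (Set.Icc a b) t :=
    ((hFd t ht).hasDerivAt).hasDerivWithinAt
  have h2 : HasDerivWithinAt F (f t) (Set.Icc a b) t := by
    have hg : HasDerivWithinAt (fun s => G s + K) (f t) (Set.Icc a b) t :=
      ((hGd t).add_const K).hasDerivWithinAt
    exact hg.congr (fun s hs => hFG s hs) (hFG t ht)
  exact ((uniqueDiffOn_Icc hab) t ht).eq_deriv _ h1 h2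

variable {d : ℕ}

local notation "E" => EuclideanSpace ℝ (Fin d)
local notation "P" => (ℝ × EuclideanSpace ℝ (Fin d) × EuclideanSpace ℝ (Fin d) ×
  EuclideanSpace ℝ (Fin d) × EuclideanSpace ℝ (Fin d))

lemma first_variation (t₁ t₂ τ : ℝ) (ht : t₁ < t₂) (hτ : 0 < τ)
    (L : P → ℝ) (hL : ContDiff ℝ 1 L)
    (δ : ℝ → E) (q₂ : E) (q q' : ℝ → E)
    (hq : ∀ t, HasDerivAt q (q' t) t) (hq' : Continuous q')
    (A : ℝ → P) (hA : A = fun s => (s, q s, q' s, q (s - τ), q' (s - τ)))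
    (hbd1 : ∀ t ∈ Set.Icc (t₁ - τ) t₁, q t = δ t) (hbd2 : q t₂ = q₂)
    (hmin : ∃ ε > 0, ∀ r r' : ℝ → E,
      (∀ t, HasDerivAt r (r' t) t) → Continuous r' →
      (∀ t ∈ Set.Icc (t₁ - τ) t₁, r t = δ t) → r t₂ = q₂ →
      (∀ t ∈ Set.Icc (t₁ - τ) t₂, ‖r t - q t‖ + ‖r' t - q' t‖ ≤ ε) →
      (∫ t in t₁..t₂, L (t, q t, q' t, q (t - τ), q' (t - τ)))
        ≤ ∫ t in t₁..t₂, L (t, r t, r' t, r (t - τ), r' (t - τ)))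
    (η η' : ℝ → E) (hη : ∀ t, HasDerivAt η (η' t) t) (hη' : Continuous η')
    (hη0 : ∀ t ∈ Set.Icc (t₁ - τ) t₁, η t = 0) (hη2 : η t₂ = 0) :
    (∫ t in t₁..t₂, fderiv ℝ L (A t) (0, η t, η' t, η (t - τ), η' (t - τ))) = 0 := by
  obtain ⟨ε₀, hε₀, hminP⟩ := hmin
  have hqc : Continuous q := by
    rw [continuous_iff_continuousAt]; exact fun t => (hq t).continuousAt
  have hηc : Continuous η := by
    rw [continuous_iff_continuousAt]; exact fun t => (hη t).continuousAt
  set B : ℝ → P := fun t => ((0:ℝ), η t, η' t, η (t - τ), η' (t - τ)) with hB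
  have hBc : Continuous B := by
    refine continuous_const.prodMk (hηc.prodMk (hη'.prodMk (Continuous.prodMk ?_ ?_)))
    · exact hηc.comp (continuous_id.sub continuous_const)
    · exact hη'.comp (continuous_id.sub continuous_const)
  have hAc : Continuous A := by
    rw [hA]
    refine continuous_id.prodMk (hqc.prodMk (hq'.prodMk (Continuous.prodMk ?_ ?_)))
    · exact hqc.comp (continuous_id.sub continuous_const)
    · exact hq'.comp (continuous_id.sub continuous_const)
  have hLd : Differentiable ℝ L := hL.differentiable one_ne_zero
  have hfderc : Continuous (fun p : P => fderiv ℝ L p) := hL.continuous_fderiv one_ne_zero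
  -- bounds
  have hcomp1 : IsCompact ((fun p : ℝ × ℝ => A p.1 + p.2 • B p.1) ''
      (Set.Icc t₁ t₂ ×ˢ Set.Icc (-1:ℝ) 1)) :=
    ((isCompact_Icc.prod isCompact_Icc).image
      (((hAc.comp continuous_fst)).add ((continuous_snd).smul (hBc.comp continuous_fst))))
  obtain ⟨M, hM⟩ := hcomp1.exists_bound_of_continuousOn (hfderc.continuousOn)
  obtain ⟨R, hR⟩ := isCompact_Icc.exists_bound_of_continuousOn
    (hBc.continuousOn (s := Set.Icc t₁ t₂))
  have hMR : ∀ t ∈ Set.Icc t₁ t₂, ∀ ε ∈ Metric.ball (0:ℝ) 1,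
      ‖fderiv ℝ L (A t + ε • B t) (B t)‖ ≤ (max M 0) * (max R 0) := by
    intro t htI ε hεb
    have hmem : A t + ε • B t ∈ (fun p : ℝ × ℝ => A p.1 + p.2 • B p.1) ''
        (Set.Icc t₁ t₂ ×ˢ Set.Icc (-1:ℝ) 1) := by
      refine ⟨(t, ε), ?_, rfl⟩
      refine Set.mk_mem_prod htI ?_
      have := mem_ball_zero_iff.1 hεb
      rw [Set.mem_Icc]; rw [Real.norm_eq_abs] at this
      constructor <;> [linarith [abs_lt.1 this]; linarith [abs_lt.1 this]]
    calc ‖fderiv ℝ L (A t + ε • B t) (B t)‖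
        ≤ ‖fderiv ℝ L (A t + ε • B t)‖ * ‖B t‖ := ContinuousLinearMap.le_opNorm _ _
      _ ≤ (max M 0) * (max R 0) := by
          apply mul_le_mul (le_trans (hM _ hmem) (le_max_left _ _))
            (le_trans (hR t htI) (le_max_left _ _)) (norm_nonneg _)
            (le_trans (norm_nonneg _) (le_trans (hM _ hmem) (le_max_left _ _)))
  -- differentiation under the integral sign
  have hderI : HasDerivAt (fun ε : ℝ => ∫ t in t₁..t₂, L (A t + ε • B t))
      (∫ t in t₁..t₂, fderiv ℝ L (A t + (0:ℝ) • B t) (B t)) 0 := by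
    refine (intervalIntegral.hasDerivAt_integral_of_dominated_loc_of_deriv_le
      (F := fun ε t => L (A t + ε • B t))
      (F' := fun ε t => fderiv ℝ L (A t + ε • B t) (B t))
      (bound := fun _ => (max M 0) * (max R 0)) (Metric.ball_mem_nhds 0 one_pos) ?_ ?_ ?_ ?_ ?_ ?_).2
    · filter_upwards with ε
      exact ((hL.continuous.comp (hAc.add (hBc.const_smul ε))).aestronglyMeasurable).restrict
    · exact (hL.continuous.comp (hAc.add (hBc.const_smul (0:ℝ)))).intervalIntegrable _ _
    · exact (((hfderc.comp (hAc.add (hBc.const_smul (0:ℝ)))).clm_apply hBc).aestronglyMeasurable).restrict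
    · filter_upwards with t htI ε hεb
      refine hMR t ?_ ε hεb
      rw [Set.uIoc_of_le ht.le] at htI
      exact Set.Ioc_subset_Icc_self htI
    · exact intervalIntegrable_const
    · filter_upwards with t htI ε hεb
      have h1 : HasDerivAt (fun ε : ℝ => A t + ε • B t) (B t) ε := by
        simpa using ((hasDerivAt_id ε).smul_const (B t)).const_add (A t)
      exact (hLd (A t + ε • B t)).hasFDerivAt.comp_hasDerivAt ε h1
  -- sup bound for η
  obtain ⟨S, hS⟩ := isCompact_Icc.exists_bound_of_continuousOn
    ((hηc.norm.add hη'.norm).continuousOn (s := Set.Icc (t₁ - τ) t₂))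
  have hS' : ∀ t ∈ Set.Icc (t₁ - τ) t₂, ‖η t‖ + ‖η' t‖ ≤ S := by
    intro t htI
    have : ‖‖η t‖ + ‖η' t‖‖ ≤ S := hS t htI
    rwa [Real.norm_of_nonneg (add_nonneg (norm_nonneg _) (norm_nonneg _))] at this
  have hS0 : 0 ≤ S := le_trans (by positivity) (hS' t₁ ⟨by linarith, ht.le⟩)
  -- integrand identification
  have hgε : ∀ ε : ℝ, (∫ t in t₁..t₂, L (A t + ε • B t))
      = ∫ t in t₁..t₂, L (t, q t + ε • η t, q' t + ε • η' t,
          q (t - τ) + ε • η (t - τ), q' (t - τ) + ε • η' (t - τ)) := by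
    intro ε
    apply intervalIntegral.integral_congr
    intro t _
    congr 1
    rw [hA, hB]
    simp [Prod.ext_iff]
  have hg0 : (∫ t in t₁..t₂, L (A t + (0:ℝ) • B t))
      = ∫ t in t₁..t₂, L (t, q t, q' t, q (t - τ), q' (t - τ)) := by
    apply intervalIntegral.integral_congr
    intro t _
    show L (A t + (0:ℝ) • B t) = L (t, q t, q' t, q (t - τ), q' (t - τ))
    rw [zero_smul, add_zero, hA]
  -- local minimality of the perturbed functional
  have hloc : IsLocalMin (fun ε : ℝ => ∫ t in t₁..t₂, L (A t + ε • B t)) 0 := by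
    have hIcc : Set.Icc (-(ε₀ / (S + 1))) (ε₀ / (S + 1)) ∈ nhds (0:ℝ) :=
      Icc_mem_nhds (by rw [neg_lt, neg_zero]; positivity) (by positivity)
    refine Filter.eventually_of_mem hIcc ?_
    intro ε hε
    rw [Set.mem_Icc] at hε
    have hεa : |ε| ≤ ε₀ / (S + 1) := abs_le.2 hε
    have hle := hminP (fun t => q t + ε • η t) (fun t => q' t + ε • η' t)
      (fun t => (hq t).add ((hη t).const_smul ε))
      (hq'.add (hη'.const_smul ε))
      (fun t htI => by show q t + ε • η t = δ t; rw [hη0 t htI, smul_zero, add_zero]; exact hbd1 t htI)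
      (by show q t₂ + ε • η t₂ = q₂; rw [hη2, smul_zero, add_zero]; exact hbd2)
      (fun t htI => by
        have h1 : ‖q t + ε • η t - q t‖ = |ε| * ‖η t‖ := by
          rw [add_sub_cancel_left, norm_smul, Real.norm_eq_abs]
        have h2 : ‖q' t + ε • η' t - q' t‖ = |ε| * ‖η' t‖ := by
          rw [add_sub_cancel_left, norm_smul, Real.norm_eq_abs]
        rw [h1, h2, ← mul_add]
        calc |ε| * (‖η t‖ + ‖η' t‖) ≤ (ε₀ / (S + 1)) * (S + 1) := by
              apply mul_le_mul hεa (le_trans (hS' t htI) (by linarith))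
                (by positivity) (by positivity)
          _ = ε₀ := div_mul_cancel₀ _ (by linarith))
    simp only []
    rw [hgε ε, hg0]
    exact hle
  have h0 : (∫ t in t₁..t₂, fderiv ℝ L (A t + (0:ℝ) • B t) (B t)) = 0 := by
    rw [← hderI.deriv]
    exact hloc.deriv_eq_zero
  have hfin : (∫ t in t₁..t₂, fderiv ℝ L (A t) ((0:ℝ), η t, η' t, η (t - τ), η' (t - τ)))
      = ∫ t in t₁..t₂, fderiv ℝ L (A t + (0:ℝ) • B t) (B t) := by
    apply intervalIntegral.integral_congr
    intro t _
    show fderiv ℝ L (A t) (B t) = fderiv ℝ L (A t + (0:ℝ) • B t) (B t)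
    rw [zero_smul, add_zero]
  exact hfin.trans h0

lemma clm_expand {X : Type*} [NormedAddCommGroup X] [NormedSpace ℝ X]
    (T : (ℝ × X × X × X × X) →L[ℝ] ℝ) (v : X) (c₁ c₂ c₃ c₄ : ℝ) :
    T (0, c₁ • v, c₂ • v, c₃ • v, c₄ • v)
      = c₁ * T (0, v, 0, 0, 0) + c₂ * T (0, 0, v, 0, 0)
        + c₃ * T (0, 0, 0, v, 0) + c₄ * T (0, 0, 0, 0, v) := by
  have h : ((0:ℝ), c₁ • v, c₂ • v, c₃ • v, c₄ • v)
      = c₁ • ((0:ℝ), v, (0:X), (0:X), (0:X)) + c₂ • ((0:ℝ), (0:X), v, (0:X), (0:X))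
        + c₃ • ((0:ℝ), (0:X), (0:X), v, (0:X)) + c₄ • ((0:ℝ), (0:X), (0:X), (0:X), v) := by
    simp [Prod.ext_iff]
  rw [h, map_add, map_add, map_add, _root_.map_smul, _root_.map_smul, _root_.map_smul, _root_.map_smul]
  simp [smul_eq_mul]


/-- Classical Euler–Lagrange equations with time delay (necessary condition).
`E = ℝ^d`, `L(t, q, q̇, q_τ, q̇_τ)` is `C¹`; partial derivatives in the various slots
are expressed through `fderiv` of `L` applied to vectors supported in one slot.
If `q` is a local minimizer (in the `C¹` topology) among admissible curves, then the
delayed Euler–Lagrange equations hold on `[t₁, t₂-τ]` and on `[t₂-τ, t₂]`. -/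
theorem euler_lagrange_time_delay
    {d : ℕ} (t₁ t₂ τ : ℝ) (ht : t₁ < t₂) (hτ : 0 < τ) (hττ : τ < t₂ - t₁)
    (L : ℝ × EuclideanSpace ℝ (Fin d) × EuclideanSpace ℝ (Fin d) ×
          EuclideanSpace ℝ (Fin d) × EuclideanSpace ℝ (Fin d) → ℝ)
    (hL : ContDiff ℝ 1 L)
    (δ : ℝ → EuclideanSpace ℝ (Fin d)) (q₂ : EuclideanSpace ℝ (Fin d))
    (q q' : ℝ → EuclideanSpace ℝ (Fin d))
    (hq : ∀ t, HasDerivAt q (q' t) t) (hq' : Continuous q')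
    -- the delayed argument tuple [q]_τ(t)
    (A : ℝ → ℝ × EuclideanSpace ℝ (Fin d) × EuclideanSpace ℝ (Fin d) ×
          EuclideanSpace ℝ (Fin d) × EuclideanSpace ℝ (Fin d))
    (hA : A = fun s => (s, q s, q' s, q (s - τ), q' (s - τ)))
    -- admissibility of q
    (hbd1 : ∀ t ∈ Set.Icc (t₁ - τ) t₁, q t = δ t) (hbd2 : q t₂ = q₂)
    -- local minimality of q in the C¹ topology
    (hmin : ∃ ε > 0, ∀ r r' : ℝ → EuclideanSpace ℝ (Fin d),
      (∀ t, HasDerivAt r (r' t) t) → Continuous r' →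
      (∀ t ∈ Set.Icc (t₁ - τ) t₁, r t = δ t) → r t₂ = q₂ →
      (∀ t ∈ Set.Icc (t₁ - τ) t₂, ‖r t - q t‖ + ‖r' t - q' t‖ ≤ ε) →
      (∫ t in t₁..t₂, L (t, q t, q' t, q (t - τ), q' (t - τ)))
        ≤ ∫ t in t₁..t₂, L (t, r t, r' t, r (t - τ), r' (t - τ)))
    -- C¹ regularity of the delayed momentum maps
    (hC1a : ∀ v : EuclideanSpace ℝ (Fin d), ∀ t ∈ Set.Icc t₁ (t₂ - τ),
      DifferentiableAt ℝ
        (fun s => fderiv ℝ L (A s) (0, 0, v, 0, 0)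
          + fderiv ℝ L (A (s + τ)) (0, 0, 0, 0, v)) t)
    (hC1b : ∀ v : EuclideanSpace ℝ (Fin d), ∀ t ∈ Set.Icc (t₂ - τ) t₂,
      DifferentiableAt ℝ (fun s => fderiv ℝ L (A s) (0, 0, v, 0, 0)) t) :
    (∀ t ∈ Set.Icc t₁ (t₂ - τ), ∀ v : EuclideanSpace ℝ (Fin d),
      deriv (fun s => fderiv ℝ L (A s) (0, 0, v, 0, 0)
          + fderiv ℝ L (A (s + τ)) (0, 0, 0, 0, v)) t
        = fderiv ℝ L (A t) (0, v, 0, 0, 0)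
          + fderiv ℝ L (A (t + τ)) (0, 0, 0, v, 0)) ∧
    (∀ t ∈ Set.Icc (t₂ - τ) t₂, ∀ v : EuclideanSpace ℝ (Fin d),
      deriv (fun s => fderiv ℝ L (A s) (0, 0, v, 0, 0)) t
        = fderiv ℝ L (A t) (0, v, 0, 0, 0)) := by
  have hqc : Continuous q := continuous_iff_continuousAt.2 fun t => (hq t).continuousAt
  have hAc : Continuous A := by
    rw [hA]
    refine continuous_id.prodMk (hqc.prodMk (hq'.prodMk (Continuous.prodMk ?_ ?_)))
    · exact hqc.comp (continuous_id.sub continuous_const)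
    · exact hq'.comp (continuous_id.sub continuous_const)
  have hfderc : Continuous (fun p : ℝ × EuclideanSpace ℝ (Fin d) × EuclideanSpace ℝ (Fin d) ×
      EuclideanSpace ℝ (Fin d) × EuclideanSpace ℝ (Fin d) => fderiv ℝ L p) :=
    hL.continuous_fderiv one_ne_zero
  have hAτc : Continuous (fun s => A (s + τ)) := hAc.comp (continuous_add_right τ)
  have hone : t₁ < t₂ - τ := by linarith
  have htwo : t₂ - τ < t₂ := by linarith
  constructor
  · -- equation on [t₁, t₂ - τ]
    intro t ht' v
    have hc1 : Continuous (fun s => fderiv ℝ L (A s) ((0:ℝ), v, 0, 0, 0)) :=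
      (hfderc.comp hAc).clm_apply continuous_const
    have hc2 : Continuous (fun s => fderiv ℝ L (A s) ((0:ℝ), 0, v, 0, 0)) :=
      (hfderc.comp hAc).clm_apply continuous_const
    have hc3τ : Continuous (fun s => fderiv ℝ L (A (s + τ)) ((0:ℝ), 0, 0, v, 0)) :=
      (hfderc.comp hAτc).clm_apply continuous_const
    have hc4τ : Continuous (fun s => fderiv ℝ L (A (s + τ)) ((0:ℝ), 0, 0, 0, v)) :=
      (hfderc.comp hAτc).clm_apply continuous_const
    refine el_key hone
      (f := fun s => fderiv ℝ L (A s) (0, v, 0, 0, 0)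
        + fderiv ℝ L (A (s + τ)) (0, 0, 0, v, 0))
      (F := fun s => fderiv ℝ L (A s) (0, 0, v, 0, 0)
        + fderiv ℝ L (A (s + τ)) (0, 0, 0, 0, v))
      (hc1.add hc3τ) (hc2.add hc4τ) (hC1a v) ?_ t ht'
    intro φ ψ hφψ hψc hφ0 hψ0
    have hφc : Continuous φ := continuous_iff_continuousAt.2 fun s => (hφψ s).continuousAt
    have hfv := first_variation t₁ t₂ τ ht hτ L hL δ q₂ q q' hq hq' A hA hbd1 hbd2 hmin
      (fun s => φ s • v) (fun s => ψ s • v)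
      (fun s => (hφψ s).smul_const v) (hψc.smul continuous_const)
      (fun s hs => by
        show φ s • v = 0
        rw [hφ0 s (fun hc => absurd hc.1 (not_lt.2 hs.2)), zero_smul])
      (by
        show φ t₂ • v = 0
        rw [hφ0 t₂ (fun hc => absurd (hc.2.trans htwo) (lt_irrefl _)), zero_smul])
    have hXc : Continuous (fun s => φ s * fderiv ℝ L (A s) ((0:ℝ), v, 0, 0, 0)
        + ψ s * fderiv ℝ L (A s) ((0:ℝ), 0, v, 0, 0)) := (hφc.mul hc1).add (hψc.mul hc2)
    have hWc : Continuous (fun s => φ s * fderiv ℝ L (A (s + τ)) ((0:ℝ), 0, 0, v, 0)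
        + ψ s * fderiv ℝ L (A (s + τ)) ((0:ℝ), 0, 0, 0, v)) := (hφc.mul hc3τ).add (hψc.mul hc4τ)
    have hI2c : Continuous (fun s : ℝ => φ (s - τ) * fderiv ℝ L (A (s - τ + τ)) ((0:ℝ), 0, 0, v, 0)
        + ψ (s - τ) * fderiv ℝ L (A (s - τ + τ)) ((0:ℝ), 0, 0, 0, v)) :=
      hWc.comp (continuous_sub_right τ)
    -- the first variation, expanded pointwise
    have ha : (∫ s in t₁..t₂,
        ((φ s * fderiv ℝ L (A s) ((0:ℝ), v, 0, 0, 0)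
            + ψ s * fderiv ℝ L (A s) ((0:ℝ), 0, v, 0, 0))
          + (φ (s - τ) * fderiv ℝ L (A (s - τ + τ)) ((0:ℝ), 0, 0, v, 0)
            + ψ (s - τ) * fderiv ℝ L (A (s - τ + τ)) ((0:ℝ), 0, 0, 0, v)))) = 0 := by
      refine Eq.trans ?_ hfv
      apply intervalIntegral.integral_congr
      intro s _
      show (φ s * fderiv ℝ L (A s) ((0:ℝ), v, 0, 0, 0)
            + ψ s * fderiv ℝ L (A s) ((0:ℝ), 0, v, 0, 0))
          + (φ (s - τ) * fderiv ℝ L (A (s - τ + τ)) ((0:ℝ), 0, 0, v, 0)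
            + ψ (s - τ) * fderiv ℝ L (A (s - τ + τ)) ((0:ℝ), 0, 0, 0, v))
          = fderiv ℝ L (A s) ((0:ℝ), φ s • v, ψ s • v, φ (s - τ) • v, ψ (s - τ) • v)
      rw [clm_expand, sub_add_cancel]
      ring
    have haa : (∫ s in t₁..t₂, (φ s * fderiv ℝ L (A s) ((0:ℝ), v, 0, 0, 0)
            + ψ s * fderiv ℝ L (A s) ((0:ℝ), 0, v, 0, 0)))
        + (∫ s in t₁..t₂, (φ (s - τ) * fderiv ℝ L (A (s - τ + τ)) ((0:ℝ), 0, 0, v, 0)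
            + ψ (s - τ) * fderiv ℝ L (A (s - τ + τ)) ((0:ℝ), 0, 0, 0, v))) = 0 := by
      rw [← intervalIntegral.integral_add (hXc.intervalIntegrable _ _)
        (hI2c.intervalIntegrable _ _)]
      exact ha
    -- change of variables in the delayed part
    have hbridge : (∫ s in t₁..t₂, (φ (s - τ) * fderiv ℝ L (A (s - τ + τ)) ((0:ℝ), 0, 0, v, 0)
            + ψ (s - τ) * fderiv ℝ L (A (s - τ + τ)) ((0:ℝ), 0, 0, 0, v)))
        = ∫ s in t₁ - τ..t₂ - τ, (φ s * fderiv ℝ L (A (s + τ)) ((0:ℝ), 0, 0, v, 0)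
            + ψ s * fderiv ℝ L (A (s + τ)) ((0:ℝ), 0, 0, 0, v)) := by
      have hshift := intervalIntegral.integral_comp_sub_right (a := t₁) (b := t₂)
        (fun u => φ u * fderiv ℝ L (A (u + τ)) ((0:ℝ), 0, 0, v, 0)
          + ψ u * fderiv ℝ L (A (u + τ)) ((0:ℝ), 0, 0, 0, v)) τ
      rw [← hshift]
    -- kill the part over [t₁ - τ, t₁]
    have hc3 : (∫ s in t₁ - τ..t₂ - τ, (φ s * fderiv ℝ L (A (s + τ)) ((0:ℝ), 0, 0, v, 0)
            + ψ s * fderiv ℝ L (A (s + τ)) ((0:ℝ), 0, 0, 0, v)))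
        = ∫ s in t₁..t₂ - τ, (φ s * fderiv ℝ L (A (s + τ)) ((0:ℝ), 0, 0, v, 0)
            + ψ s * fderiv ℝ L (A (s + τ)) ((0:ℝ), 0, 0, 0, v)) := by
      have hz : (∫ s in t₁ - τ..t₁, (φ s * fderiv ℝ L (A (s + τ)) ((0:ℝ), 0, 0, v, 0)
            + ψ s * fderiv ℝ L (A (s + τ)) ((0:ℝ), 0, 0, 0, v))) = 0 := by
        have hzz : (∫ s in t₁ - τ..t₁, (φ s * fderiv ℝ L (A (s + τ)) ((0:ℝ), 0, 0, v, 0)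
            + ψ s * fderiv ℝ L (A (s + τ)) ((0:ℝ), 0, 0, 0, v)))
            = ∫ s in t₁ - τ..t₁, (0:ℝ) := by
          apply intervalIntegral.integral_congr
          intro s hs
          rw [Set.uIcc_of_le (by linarith), Set.mem_Icc] at hs
          have hns : s ∉ Set.Ioo t₁ (t₂ - τ) := fun hc => absurd hc.1 (not_lt.2 hs.2)
          show φ s * fderiv ℝ L (A (s + τ)) ((0:ℝ), 0, 0, v, 0)
              + ψ s * fderiv ℝ L (A (s + τ)) ((0:ℝ), 0, 0, 0, v) = 0
          rw [hφ0 s hns, hψ0 s hns]; ring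
        rw [hzz]; simp
      rw [← intervalIntegral.integral_add_adjacent_intervals
        (a := t₁ - τ) (b := t₁) (c := t₂ - τ)
        (hWc.intervalIntegrable _ _) (hWc.intervalIntegrable _ _), hz, zero_add]
    -- kill the part over [t₂ - τ, t₂]
    have hc4 : (∫ s in t₁..t₂, (φ s * fderiv ℝ L (A s) ((0:ℝ), v, 0, 0, 0)
            + ψ s * fderiv ℝ L (A s) ((0:ℝ), 0, v, 0, 0)))
        = ∫ s in t₁..t₂ - τ, (φ s * fderiv ℝ L (A s) ((0:ℝ), v, 0, 0, 0)
            + ψ s * fderiv ℝ L (A s) ((0:ℝ), 0, v, 0, 0)) := by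
      have hz : (∫ s in t₂ - τ..t₂, (φ s * fderiv ℝ L (A s) ((0:ℝ), v, 0, 0, 0)
            + ψ s * fderiv ℝ L (A s) ((0:ℝ), 0, v, 0, 0))) = 0 := by
        have hzz : (∫ s in t₂ - τ..t₂, (φ s * fderiv ℝ L (A s) ((0:ℝ), v, 0, 0, 0)
            + ψ s * fderiv ℝ L (A s) ((0:ℝ), 0, v, 0, 0)))
            = ∫ s in t₂ - τ..t₂, (0:ℝ) := by
          apply intervalIntegral.integral_congr
          intro s hs
          rw [Set.uIcc_of_le (by linarith), Set.mem_Icc] at hs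
          have hns : s ∉ Set.Ioo t₁ (t₂ - τ) := fun hc => absurd hc.2 (not_lt.2 hs.1)
          show φ s * fderiv ℝ L (A s) ((0:ℝ), v, 0, 0, 0)
              + ψ s * fderiv ℝ L (A s) ((0:ℝ), 0, v, 0, 0) = 0
          rw [hφ0 s hns, hψ0 s hns]; ring
        rw [hzz]; simp
      rw [← intervalIntegral.integral_add_adjacent_intervals
        (a := t₁) (b := t₂ - τ) (c := t₂)
        (hXc.intervalIntegrable _ _) (hXc.intervalIntegrable _ _), hz, add_zero]
    -- combine
    have hfin : (∫ s in t₁..t₂ - τ,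
        ((fderiv ℝ L (A s) ((0:ℝ), v, 0, 0, 0)
            + fderiv ℝ L (A (s + τ)) ((0:ℝ), 0, 0, v, 0)) * φ s
          + (fderiv ℝ L (A s) ((0:ℝ), 0, v, 0, 0)
            + fderiv ℝ L (A (s + τ)) ((0:ℝ), 0, 0, 0, v)) * ψ s))
        = (∫ s in t₁..t₂ - τ, (φ s * fderiv ℝ L (A s) ((0:ℝ), v, 0, 0, 0)
            + ψ s * fderiv ℝ L (A s) ((0:ℝ), 0, v, 0, 0)))
          + ∫ s in t₁..t₂ - τ, (φ s * fderiv ℝ L (A (s + τ)) ((0:ℝ), 0, 0, v, 0)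
            + ψ s * fderiv ℝ L (A (s + τ)) ((0:ℝ), 0, 0, 0, v)) := by
      rw [← intervalIntegral.integral_add (hXc.intervalIntegrable _ _)
        (hWc.intervalIntegrable _ _)]
      apply intervalIntegral.integral_congr
      intro s _
      show (fderiv ℝ L (A s) ((0:ℝ), v, 0, 0, 0)
            + fderiv ℝ L (A (s + τ)) ((0:ℝ), 0, 0, v, 0)) * φ s
          + (fderiv ℝ L (A s) ((0:ℝ), 0, v, 0, 0)
            + fderiv ℝ L (A (s + τ)) ((0:ℝ), 0, 0, 0, v)) * ψ s
          = (φ s * fderiv ℝ L (A s) ((0:ℝ), v, 0, 0, 0)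
            + ψ s * fderiv ℝ L (A s) ((0:ℝ), 0, v, 0, 0))
          + (φ s * fderiv ℝ L (A (s + τ)) ((0:ℝ), 0, 0, v, 0)
            + ψ s * fderiv ℝ L (A (s + τ)) ((0:ℝ), 0, 0, 0, v))
      ring
    rw [hbridge, hc3, hc4] at haa
    show (∫ s in t₁..t₂ - τ,
        ((fderiv ℝ L (A s) ((0:ℝ), v, 0, 0, 0)
            + fderiv ℝ L (A (s + τ)) ((0:ℝ), 0, 0, v, 0)) * φ s
          + (fderiv ℝ L (A s) ((0:ℝ), 0, v, 0, 0)
            + fderiv ℝ L (A (s + τ)) ((0:ℝ), 0, 0, 0, v)) * ψ s)) = 0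
    rw [hfin, haa]
  · -- equation on [t₂ - τ, t₂]
    intro t ht' v
    have hc1 : Continuous (fun s => fderiv ℝ L (A s) ((0:ℝ), v, 0, 0, 0)) :=
      (hfderc.comp hAc).clm_apply continuous_const
    have hc2 : Continuous (fun s => fderiv ℝ L (A s) ((0:ℝ), 0, v, 0, 0)) :=
      (hfderc.comp hAc).clm_apply continuous_const
    refine el_key htwo
      (f := fun s => fderiv ℝ L (A s) (0, v, 0, 0, 0))
      (F := fun s => fderiv ℝ L (A s) (0, 0, v, 0, 0))
      hc1 hc2 (hC1b v) ?_ t ht'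
    intro φ ψ hφψ hψc hφ0 hψ0
    have hφc : Continuous φ := continuous_iff_continuousAt.2 fun s => (hφψ s).continuousAt
    have hfv := first_variation t₁ t₂ τ ht hτ L hL δ q₂ q q' hq hq' A hA hbd1 hbd2 hmin
      (fun s => φ s • v) (fun s => ψ s • v)
      (fun s => (hφψ s).smul_const v) (hψc.smul continuous_const)
      (fun s hs => by
        show φ s • v = 0
        rw [hφ0 s (fun hc => absurd hc.1 (not_lt.2 (by linarith [hs.2]))), zero_smul])
      (by
        show φ t₂ • v = 0
        rw [hφ0 t₂ (fun hc => absurd hc.2 (lt_irrefl _)), zero_smul])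
    have hXc : Continuous (fun s => fderiv ℝ L (A s) ((0:ℝ), v, 0, 0, 0) * φ s
        + fderiv ℝ L (A s) ((0:ℝ), 0, v, 0, 0) * ψ s) := (hc1.mul hφc).add (hc2.mul hψc)
    have h1 : (∫ s in t₁..t₂, (fderiv ℝ L (A s) ((0:ℝ), v, 0, 0, 0) * φ s
        + fderiv ℝ L (A s) ((0:ℝ), 0, v, 0, 0) * ψ s)) = 0 := by
      refine Eq.trans ?_ hfv
      apply intervalIntegral.integral_congr
      intro s hs
      rw [Set.uIcc_of_le ht.le, Set.mem_Icc] at hs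
      show fderiv ℝ L (A s) ((0:ℝ), v, 0, 0, 0) * φ s
          + fderiv ℝ L (A s) ((0:ℝ), 0, v, 0, 0) * ψ s
          = fderiv ℝ L (A s) ((0:ℝ), φ s • v, ψ s • v, φ (s - τ) • v, ψ (s - τ) • v)
      have hns : s - τ ∉ Set.Ioo (t₂ - τ) t₂ :=
        fun hc => absurd hc.1 (not_lt.2 (by linarith [hs.2]))
      rw [clm_expand, hφ0 _ hns, hψ0 _ hns]
      ring
    have hz : (∫ s in t₁..t₂ - τ, (fderiv ℝ L (A s) ((0:ℝ), v, 0, 0, 0) * φ s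
        + fderiv ℝ L (A s) ((0:ℝ), 0, v, 0, 0) * ψ s)) = 0 := by
      have hzz : (∫ s in t₁..t₂ - τ, (fderiv ℝ L (A s) ((0:ℝ), v, 0, 0, 0) * φ s
          + fderiv ℝ L (A s) ((0:ℝ), 0, v, 0, 0) * ψ s)) = ∫ s in t₁..t₂ - τ, (0:ℝ) := by
        apply intervalIntegral.integral_congr
        intro s hs
        rw [Set.uIcc_of_le hone.le, Set.mem_Icc] at hs
        have hns : s ∉ Set.Ioo (t₂ - τ) t₂ := fun hc => absurd hc.1 (not_lt.2 hs.2)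
        show fderiv ℝ L (A s) ((0:ℝ), v, 0, 0, 0) * φ s
            + fderiv ℝ L (A s) ((0:ℝ), 0, v, 0, 0) * ψ s = 0
        rw [hφ0 s hns, hψ0 s hns]; ring
      rw [hzz]; simp
    have hsplit := intervalIntegral.integral_add_adjacent_intervals (μ := MeasureTheory.volume)
      (a := t₁) (b := t₂ - τ) (c := t₂)
      (hXc.intervalIntegrable _ _) (hXc.intervalIntegrable _ _)
    rw [hz, zero_add] at hsplit
    rw [hsplit]
    exact h1
end

section
/- First variation formula with time delay: for L of class C¹ and q, h ∈ C¹([t₁ - τ, t₂], ℝ^d) with h ≡ 0 on [t₁ - τ, t₁], the Gateaux derivative of I[q] = ∫_{t₁}^{t₂} L(t, q, q̇, q∘ρ^τ, q̇∘ρ^τ) dt at q in direction h equals ∫_{t₁}^{t₂-τ} [(L_q[q]_τ(t) + L_{q_τ}[q]_τ(t+τ))·h(t) + (L_{q̇}[q]_τ(t) + L_{q̇_τ}[q]_τ(t+τ))·ḣ(t)] dt + ∫_{t₂-τ}^{t₂} [L_q[q]_τ(t)·h(t) + L_{q̇}[q]_τ(t)·ḣ(t)] dt. -/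
open Set intervalIntegral

/-- Differentiation under the interval integral for a C¹ integrand along an affine path. -/
theorem first_variation_aux {X : Type*} [NormedAddCommGroup X] [NormedSpace ℝ X]
    (L : X → ℝ) (hL : ContDiff ℝ 1 L) (Q H : ℝ → X) (hQ : Continuous Q) (hH : Continuous H)
    (a b : ℝ) :
    HasDerivAt (fun ε : ℝ => ∫ t in a..b, L (Q t + ε • H t))
      (∫ t in a..b, fderiv ℝ L (Q t) (H t)) 0 := by
  have hLd : Differentiable ℝ L := hL.differentiable one_ne_zero
  have hfc : Continuous (fderiv ℝ L) := hL.continuous_fderiv one_ne_zero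
  have hcurve : Continuous (fun p : ℝ × ℝ => Q p.2 + p.1 • H p.2) :=
    (hQ.comp continuous_snd).add (continuous_fst.smul (hH.comp continuous_snd))
  have hG : Continuous (fun p : ℝ × ℝ => fderiv ℝ L (Q p.2 + p.1 • H p.2) (H p.2)) :=
    (hfc.comp hcurve).clm_apply (hH.comp continuous_snd)
  obtain ⟨C, hC⟩ :=
    ((isCompact_Icc (a := (-1:ℝ)) (b := 1)).prod (isCompact_uIcc (a := a) (b := b))).exists_bound_of_continuousOn hG.continuousOn
  have hFc : ∀ ε : ℝ, Continuous (fun t => L (Q t + ε • H t)) := fun ε =>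
    hL.continuous.comp (hQ.add (continuous_const.smul hH))
  have hF'c : Continuous (fun t => fderiv ℝ L (Q t + (0:ℝ) • H t) (H t)) :=
    hG.comp (continuous_const.prodMk continuous_id)
  have hdiff : ∀ (t ε : ℝ), HasDerivAt (fun ε : ℝ => L (Q t + ε • H t))
      (fderiv ℝ L (Q t + ε • H t) (H t)) ε := by
    intro t ε
    have hpath : HasDerivAt (fun ε : ℝ => Q t + ε • H t) (H t) ε := by
      simpa using ((hasDerivAt_id ε).smul_const (H t)).const_add (Q t)
    exact (hLd _).hasFDerivAt.comp_hasDerivAt ε hpath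
  have key := intervalIntegral.hasDerivAt_integral_of_dominated_loc_of_deriv_le
    (F := fun ε t => L (Q t + ε • H t))
    (F' := fun ε t => fderiv ℝ L (Q t + ε • H t) (H t))
    (x₀ := (0:ℝ)) (a := a) (b := b) (μ := MeasureTheory.volume)
    (bound := fun _ => C) (Metric.ball_mem_nhds (0:ℝ) one_pos)
    (Filter.Eventually.of_forall fun ε => (hFc ε).aestronglyMeasurable)
    ((hFc 0).intervalIntegrable a b)
    hF'c.aestronglyMeasurable
    (Filter.Eventually.of_forall fun t ht ε hε => by
      have h1 : ε ∈ Set.Icc (-1:ℝ) 1 := by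
        have := Metric.mem_ball.mp hε
        rw [Real.dist_eq, sub_zero] at this
        exact abs_le.mp this.le
      have h2 : t ∈ Set.uIcc a b := Set.uIoc_subset_uIcc ht
      exact hC (ε, t) ⟨h1, h2⟩)
    intervalIntegrable_const
    (Filter.Eventually.of_forall fun t ht ε hε => hdiff t ε)
  simpa using key.2

/-- First variation formula with time delay: the Gateaux derivative of the delayed
action functional at `q` in a direction `h` vanishing on `[t₁-τ, t₁]` equals the sum
of the two stated integrals (partial derivatives of `L` are encoded by `fderiv` of
`L` applied to vectors supported in the corresponding slots). -/
theorem first_variation_time_delay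
    {d : ℕ} (t₁ t₂ τ : ℝ) (ht : t₁ < t₂) (hτ : 0 < τ) (hττ : τ < t₂ - t₁)
    (L : ℝ × EuclideanSpace ℝ (Fin d) × EuclideanSpace ℝ (Fin d) ×
          EuclideanSpace ℝ (Fin d) × EuclideanSpace ℝ (Fin d) → ℝ)
    (hL : ContDiff ℝ 1 L)
    (q q' h h' : ℝ → EuclideanSpace ℝ (Fin d))
    (hq : ∀ t, HasDerivAt q (q' t) t) (hq' : Continuous q')
    (hh : ∀ t, HasDerivAt h (h' t) t) (hh' : Continuous h')
    (hh0 : ∀ t ∈ Set.Icc (t₁ - τ) t₁, h t = 0)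
    (A : ℝ → ℝ × EuclideanSpace ℝ (Fin d) × EuclideanSpace ℝ (Fin d) ×
          EuclideanSpace ℝ (Fin d) × EuclideanSpace ℝ (Fin d))
    (hA : A = fun s => (s, q s, q' s, q (s - τ), q' (s - τ))) :
    HasDerivAt
      (fun ε : ℝ => ∫ t in t₁..t₂,
        L (t, q t + ε • h t, q' t + ε • h' t,
            q (t - τ) + ε • h (t - τ), q' (t - τ) + ε • h' (t - τ)))
      ((∫ t in t₁..(t₂ - τ),
          (fderiv ℝ L (A t) (0, h t, h' t, 0, 0)
            + fderiv ℝ L (A (t + τ)) (0, 0, 0, h t, h' t)))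
        + ∫ t in (t₂ - τ)..t₂, fderiv ℝ L (A t) (0, h t, h' t, 0, 0))
      0 := by
  have hqc : Continuous q := continuous_iff_continuousAt.mpr fun t => (hq t).continuousAt
  have hhc : Continuous h := continuous_iff_continuousAt.mpr fun t => (hh t).continuousAt
  have hAc : Continuous A := by rw [hA]; fun_prop
  have hvc : Continuous (fun t : ℝ =>
      ((0:ℝ), h t, h' t, h (t - τ), h' (t - τ))) := by fun_prop
  have key := first_variation_aux L hL A
    (fun t => ((0:ℝ), h t, h' t, h (t - τ), h' (t - τ))) hAc hvc t₁ t₂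
  have heq : ∀ (ε t : ℝ),
      A t + ε • (((0:ℝ), h t, h' t, h (t - τ), h' (t - τ)) :
        ℝ × EuclideanSpace ℝ (Fin d) × EuclideanSpace ℝ (Fin d) ×
          EuclideanSpace ℝ (Fin d) × EuclideanSpace ℝ (Fin d)) =
      (t, q t + ε • h t, q' t + ε • h' t,
        q (t - τ) + ε • h (t - τ), q' (t - τ) + ε • h' (t - τ)) := by
    intro ε t
    simp [hA, Prod.mk_add_mk, Prod.smul_mk]
  simp only [heq] at key
  -- now compute the value of the derivative
  have hfc : Continuous (fderiv ℝ L) := hL.continuous_fderiv one_ne_zero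
  have hPc : Continuous (fun t : ℝ => fderiv ℝ L (A t) (0, h t, h' t, 0, 0)) :=
    (hfc.comp hAc).clm_apply (by fun_prop)
  have hQc : Continuous (fun t : ℝ => fderiv ℝ L (A (t + τ)) (0, 0, 0, h t, h' t)) :=
    (hfc.comp (hAc.comp (by fun_prop))).clm_apply (by fun_prop)
  have hud : UniqueDiffOn ℝ (Set.Icc (t₁ - τ) t₁) := uniqueDiffOn_Icc (by linarith)
  have hh'0 : ∀ t ∈ Set.Icc (t₁ - τ) t₁, h' t = 0 := by
    intro t htm
    have h1 : HasDerivWithinAt h (h' t) (Set.Icc (t₁ - τ) t₁) t := (hh t).hasDerivWithinAt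
    have h2 : HasDerivWithinAt h 0 (Set.Icc (t₁ - τ) t₁) t :=
      (hasDerivWithinAt_const t _ (0 : EuclideanSpace ℝ (Fin d))).congr
        (fun y hy => hh0 y hy) (hh0 t htm)
    rw [← h1.derivWithin (hud t htm), h2.derivWithin (hud t htm)]
  have hzero : (∫ t in (t₁ - τ)..t₁, fderiv ℝ L (A (t + τ)) (0, 0, 0, h t, h' t)) = 0 := by
    rw [intervalIntegral.integral_congr (g := fun _ => (0:ℝ)) ?_]
    · simp
    · intro t htm
      rw [Set.uIcc_of_le (by linarith : t₁ - τ ≤ t₁)] at htm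
      show fderiv ℝ L (A (t + τ)) (0, 0, 0, h t, h' t) = 0
      rw [hh0 t htm, hh'0 t htm]
      have hz : (((0:ℝ), (0 : EuclideanSpace ℝ (Fin d)), (0 : EuclideanSpace ℝ (Fin d)),
          (0 : EuclideanSpace ℝ (Fin d)), (0 : EuclideanSpace ℝ (Fin d))) :
          ℝ × EuclideanSpace ℝ (Fin d) × EuclideanSpace ℝ (Fin d) ×
            EuclideanSpace ℝ (Fin d) × EuclideanSpace ℝ (Fin d)) = 0 := rfl
      rw [hz, map_zero]
  have hsplit : ∀ t : ℝ,
      fderiv ℝ L (A t) ((0:ℝ), h t, h' t, h (t - τ), h' (t - τ))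
        = fderiv ℝ L (A t) (0, h t, h' t, 0, 0)
          + fderiv ℝ L (A (t - τ + τ)) (0, 0, 0, h (t - τ), h' (t - τ)) := by
    intro t
    rw [sub_add_cancel, ← map_add]
    congr 1
    simp [Prod.mk_add_mk]
  have e1 : (∫ t in t₁..t₂, fderiv ℝ L (A t) ((0:ℝ), h t, h' t, h (t - τ), h' (t - τ)))
      = (∫ t in t₁..t₂, fderiv ℝ L (A t) (0, h t, h' t, 0, 0))
        + ∫ t in t₁..t₂, fderiv ℝ L (A (t - τ + τ)) (0, 0, 0, h (t - τ), h' (t - τ)) := by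
    simp only [hsplit]
    exact intervalIntegral.integral_add (hPc.intervalIntegrable _ _)
      ((hQc.comp (continuous_id.sub continuous_const)).intervalIntegrable _ _)
  have e2 : (∫ t in t₁..t₂, fderiv ℝ L (A (t - τ + τ)) (0, 0, 0, h (t - τ), h' (t - τ)))
      = ∫ t in (t₁ - τ)..(t₂ - τ), fderiv ℝ L (A (t + τ)) (0, 0, 0, h t, h' t) :=
    intervalIntegral.integral_comp_sub_right
      (fun s => fderiv ℝ L (A (s + τ)) (0, 0, 0, h s, h' s)) τ
  have e3 : (∫ t in (t₁ - τ)..t₁, fderiv ℝ L (A (t + τ)) (0, 0, 0, h t, h' t))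
      + (∫ t in t₁..(t₂ - τ), fderiv ℝ L (A (t + τ)) (0, 0, 0, h t, h' t))
      = ∫ t in (t₁ - τ)..(t₂ - τ), fderiv ℝ L (A (t + τ)) (0, 0, 0, h t, h' t) :=
    intervalIntegral.integral_add_adjacent_intervals
      (hQc.intervalIntegrable _ _) (hQc.intervalIntegrable _ _)
  have e4 : (∫ t in t₁..(t₂ - τ), fderiv ℝ L (A t) ((0:ℝ), h t, h' t, 0, 0))
      + (∫ t in (t₂ - τ)..t₂, fderiv ℝ L (A t) ((0:ℝ), h t, h' t, 0, 0))
      = ∫ t in t₁..t₂, fderiv ℝ L (A t) ((0:ℝ), h t, h' t, 0, 0) :=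
    intervalIntegral.integral_add_adjacent_intervals
      (hPc.intervalIntegrable _ _) (hPc.intervalIntegrable _ _)
  have e5 : (∫ t in t₁..(t₂ - τ),
        (fderiv ℝ L (A t) ((0:ℝ), h t, h' t, 0, 0)
          + fderiv ℝ L (A (t + τ)) (0, 0, 0, h t, h' t)))
      = (∫ t in t₁..(t₂ - τ), fderiv ℝ L (A t) ((0:ℝ), h t, h' t, 0, 0))
        + ∫ t in t₁..(t₂ - τ), fderiv ℝ L (A (t + τ)) (0, 0, 0, h t, h' t) :=
    intervalIntegral.integral_add (hPc.intervalIntegrable _ _) (hQc.intervalIntegrable _ _)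
  have hval : ((∫ t in t₁..(t₂ - τ),
          (fderiv ℝ L (A t) (0, h t, h' t, 0, 0)
            + fderiv ℝ L (A (t + τ)) (0, 0, 0, h t, h' t)))
        + ∫ t in (t₂ - τ)..t₂, fderiv ℝ L (A t) (0, h t, h' t, 0, 0))
      = ∫ t in t₁..t₂, fderiv ℝ L (A t) ((0:ℝ), h t, h' t, h (t - τ), h' (t - τ)) := by
    rw [e5, e1, e2, ← e3, hzero]
    linarith [e4]
  rw [hval]
  exact key
end

section
/- Barrow rule for the quantum derivative in the differentiable case: if f ∈ C¹([t₁, t₂], ℝ), then ∫_{t₁}^{t₂} □_ε f(t) dt → f(t₂) - f(t₁) as ε → 0⁺, where □_ε f is the ε-scale derivative and the integral is of the complex-valued function □_ε f (extended continuously to the endpoints using one-sided quantum derivatives where needed). -/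
open Set Filter Topology intervalIntegral

/-- Barrow rule for the quantum derivative in the differentiable case:
if `f ∈ C¹([t₁,t₂], ℝ)` then `∫_{t₁+ε}^{t₂-ε} □_ε f(t) dt → f(t₂) - f(t₁)` in `ℂ`
as `ε → 0⁺`, where `□_ε f` is the ε-scale derivative. -/
theorem quantum_barrow_rule_C1
    (t₁ t₂ : ℝ) (ht : t₁ < t₂) (f f' : ℝ → ℝ)
    (hf : ∀ s ∈ Set.Icc t₁ t₂, HasDerivWithinAt f (f' s) (Set.Icc t₁ t₂) s)
    (hf' : ContinuousOn f' (Set.Icc t₁ t₂)) :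
    Tendsto
      (fun ε : ℝ => ∫ t in (t₁ + ε)..(t₂ - ε),
        ((1 / 2 : ℂ) *
          (((((f (t + ε) - f t) / ε) + ((f t - f (t - ε)) / ε) : ℝ) : ℂ)
            - Complex.I *
              ((((f (t + ε) - f t) / ε) - ((f t - f (t - ε)) / ε) : ℝ) : ℂ))))
      (𝓝[>] (0 : ℝ)) (𝓝 ((f t₂ - f t₁ : ℝ) : ℂ)) := by
  have h12 : t₁ ≤ t₂ := ht.le
  have hfc : ContinuousOn f (Set.Icc t₁ t₂) := fun s hs => (hf s hs).continuousWithinAt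
  set g : ℝ → ℝ := fun x => f ((Set.projIcc t₁ t₂ h12 x : ℝ)) with hgdef
  have hgc : Continuous g :=
    hfc.comp_continuous (continuous_projIcc.subtype_val)
      (fun x => (Set.projIcc t₁ t₂ h12 x).2)
  have hgf : ∀ x ∈ Set.Icc t₁ t₂, g x = f x := by
    intro x hx
    simp [hgdef, Set.projIcc_of_mem h12 hx]
  set G : ℝ → ℝ := fun x => ∫ u in t₁..x, g u with hGdef
  have hG : ∀ x, HasDerivAt G (g x) x := fun x =>
    (hgc.integral_hasStrictDerivAt t₁ x).hasDerivAt
  have hGsub : ∀ c b : ℝ, (∫ u in c..b, g u) = G b - G c := by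
    intro c b
    rw [hGdef]
    exact (integral_interval_sub_left (hgc.intervalIntegrable _ _)
      (hgc.intervalIntegrable _ _)).symm
  -- key limit
  have key : ∀ c₁ c₂ c₃ c₄ : ℝ,
      Tendsto (fun ε : ℝ =>
          (G (t₂ + c₁ * ε) - G (t₁ + c₂ * ε) - G (t₂ + c₃ * ε) + G (t₁ + c₄ * ε)) / ε)
        (𝓝[>] (0 : ℝ)) (𝓝 ((c₁ - c₃) * g t₂ + (c₄ - c₂) * g t₁)) := by
    intro c₁ c₂ c₃ c₄
    have d : ∀ a c : ℝ, HasDerivAt (fun ε : ℝ => G (a + c * ε)) (g a * c) 0 := by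
      intro a c
      have := (hG (a + c * 0)).comp 0 (((hasDerivAt_id (0 : ℝ)).const_mul c).const_add a)
      simp only [mul_zero, add_zero, mul_one] at this
      exact this
    have h1 : HasDerivAt
        (fun ε : ℝ => G (t₂ + c₁ * ε) - G (t₁ + c₂ * ε) - G (t₂ + c₃ * ε) + G (t₁ + c₄ * ε))
        ((c₁ - c₃) * g t₂ + (c₄ - c₂) * g t₁) 0 := by
      have := (((d t₂ c₁).sub (d t₁ c₂)).sub (d t₂ c₃)).add (d t₁ c₄)
      rw [show (c₁ - c₃) * g t₂ + (c₄ - c₂) * g t₁ = g t₂ * c₁ - g t₁ * c₂ - g t₂ * c₃ + g t₁ * c₄ by ring]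
      exact this
    have h2 := hasDerivAt_iff_tendsto_slope.mp h1
    have h3 : Tendsto (slope
        (fun ε : ℝ => G (t₂ + c₁ * ε) - G (t₁ + c₂ * ε) - G (t₂ + c₃ * ε) + G (t₁ + c₄ * ε)) 0)
        (𝓝[>] (0 : ℝ)) (𝓝 ((c₁ - c₃) * g t₂ + (c₄ - c₂) * g t₁)) :=
      h2.mono_left (nhdsWithin_mono 0 (fun x hx => ne_of_gt hx))
    refine h3.congr (fun ε => ?_)
    simp only [slope_def_field, mul_zero, add_zero, sub_zero]
    ring
  -- the two real limits
  have hJp : Tendsto (fun ε : ℝ => ∫ t in (t₁ + ε)..(t₂ - ε), (g (t + ε) - g t) / ε)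
      (𝓝[>] (0 : ℝ)) (𝓝 (g t₂ - g t₁)) := by
    have heq : ∀ ε : ℝ, (∫ t in (t₁ + ε)..(t₂ - ε), (g (t + ε) - g t) / ε) =
        (G (t₂ + 0 * ε) - G (t₁ + 2 * ε) - G (t₂ + (-1) * ε) + G (t₁ + 1 * ε)) / ε := by
      intro ε
      have hc1 : Continuous fun t : ℝ => g (t + ε) := hgc.comp (continuous_id.add continuous_const)
      rw [intervalIntegral.integral_div,
        intervalIntegral.integral_sub (hc1.intervalIntegrable _ _)
          (hgc.intervalIntegrable _ _),
        intervalIntegral.integral_comp_add_right, hGsub, hGsub]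
      congr 1
      have e1 : t₁ + ε + ε = t₁ + 2 * ε := by ring
      have e2 : t₂ - ε + ε = t₂ + 0 * ε := by ring
      have e3 : t₂ - ε = t₂ + (-1) * ε := by ring
      have e4 : t₁ + ε = t₁ + 1 * ε := by ring
      rw [e1, e2, e3, e4]
      ring
    simp only [heq]
    have := key 0 2 (-1) 1
    convert this using 2
    ring
  have hJm : Tendsto (fun ε : ℝ => ∫ t in (t₁ + ε)..(t₂ - ε), (g t - g (t - ε)) / ε)
      (𝓝[>] (0 : ℝ)) (𝓝 (g t₂ - g t₁)) := by
    have heq : ∀ ε : ℝ, (∫ t in (t₁ + ε)..(t₂ - ε), (g t - g (t - ε)) / ε) =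
        (G (t₂ + (-1) * ε) - G (t₁ + 1 * ε) - G (t₂ + (-2) * ε) + G (t₁ + 0 * ε)) / ε := by
      intro ε
      have hc1 : Continuous fun t : ℝ => g (t - ε) := hgc.comp (continuous_id.sub continuous_const)
      rw [intervalIntegral.integral_div,
        intervalIntegral.integral_sub (hgc.intervalIntegrable _ _)
          (hc1.intervalIntegrable _ _),
        intervalIntegral.integral_comp_sub_right, hGsub, hGsub]
      congr 1
      have e1 : t₂ - ε = t₂ + (-1) * ε := by ring
      have e2 : t₁ + ε = t₁ + 1 * ε := by ring
      have e3 : t₂ - ε - ε = t₂ + (-2) * ε := by ring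
      have e4 : t₁ + ε - ε = t₁ + 0 * ε := by ring
      rw [e3, e4, e1, e2]
      ring
    simp only [heq]
    have := key (-1) 1 (-2) 0
    convert this using 2
    ring
  -- combine into the complex limit
  have hC : Tendsto (fun ε : ℝ =>
        ((1 - Complex.I) / 2) * ((∫ t in (t₁ + ε)..(t₂ - ε), (g (t + ε) - g t) / ε : ℝ) : ℂ)
        + ((1 + Complex.I) / 2) * ((∫ t in (t₁ + ε)..(t₂ - ε), (g t - g (t - ε)) / ε : ℝ) : ℂ))
      (𝓝[>] (0 : ℝ)) (𝓝 ((f t₂ - f t₁ : ℝ) : ℂ)) := by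
    have h1 : Tendsto (fun ε : ℝ =>
        ((∫ t in (t₁ + ε)..(t₂ - ε), (g (t + ε) - g t) / ε : ℝ) : ℂ)) (𝓝[>] (0 : ℝ))
        (𝓝 ((g t₂ - g t₁ : ℝ) : ℂ)) :=
      (Complex.continuous_ofReal.continuousAt.tendsto).comp hJp
    have h2 : Tendsto (fun ε : ℝ =>
        ((∫ t in (t₁ + ε)..(t₂ - ε), (g t - g (t - ε)) / ε : ℝ) : ℂ)) (𝓝[>] (0 : ℝ))
        (𝓝 ((g t₂ - g t₁ : ℝ) : ℂ)) :=
      (Complex.continuous_ofReal.continuousAt.tendsto).comp hJm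
    have := ((h1.const_mul ((1 - Complex.I) / 2)).add (h2.const_mul ((1 + Complex.I) / 2)))
    have hg2 : g t₂ = f t₂ := hgf t₂ ⟨h12, le_refl _⟩
    have hg1 : g t₁ = f t₁ := hgf t₁ ⟨le_refl _, h12⟩
    convert this using 2
    rw [hg1, hg2]
    ring
  refine hC.congr' ?_
  have hmem : Set.Ioo (0 : ℝ) ((t₂ - t₁) / 2) ∈ 𝓝[>] (0 : ℝ) :=
    Ioo_mem_nhdsGT_of_mem ⟨le_refl _, by linarith⟩
  filter_upwards [hmem] with ε hε
  obtain ⟨hε0, hε2⟩ := hε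
  have hab : t₁ + ε ≤ t₂ - ε := by linarith
  -- rewrite f as g inside the integral
  have hcongr : (∫ t in (t₁ + ε)..(t₂ - ε),
      (((1 - Complex.I) / 2) * (((g (t + ε) - g t) / ε : ℝ) : ℂ)
        + ((1 + Complex.I) / 2) * (((g t - g (t - ε)) / ε : ℝ) : ℂ))) =
      ∫ t in (t₁ + ε)..(t₂ - ε),
        ((1 / 2 : ℂ) *
          (((((f (t + ε) - f t) / ε) + ((f t - f (t - ε)) / ε) : ℝ) : ℂ)
            - Complex.I *
              ((((f (t + ε) - f t) / ε) - ((f t - f (t - ε)) / ε) : ℝ) : ℂ))) := by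
    apply intervalIntegral.integral_congr
    intro t htmem
    rw [Set.uIcc_of_le hab] at htmem
    obtain ⟨hta, htb⟩ := htmem
    have h1 : g (t + ε) = f (t + ε) := hgf _ ⟨by linarith, by linarith⟩
    have h2 : g t = f t := hgf _ ⟨by linarith, by linarith⟩
    have h3 : g (t - ε) = f (t - ε) := hgf _ ⟨by linarith, by linarith⟩
    simp only [h1, h2, h3]
    push_cast
    ring
  rw [← hcongr]
  have hi1 : Continuous fun t : ℝ =>
      ((1 - Complex.I) / 2) * (((g (t + ε) - g t) / ε : ℝ) : ℂ) := by
    exact continuous_const.mul (Complex.continuous_ofReal.comp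
      (((hgc.comp (continuous_id.add continuous_const)).sub hgc).div_const ε))
  have hi2 : Continuous fun t : ℝ =>
      ((1 + Complex.I) / 2) * (((g t - g (t - ε)) / ε : ℝ) : ℂ) := by
    exact continuous_const.mul (Complex.continuous_ofReal.comp
      ((hgc.sub (hgc.comp (continuous_id.sub continuous_const))).div_const ε))
  rw [intervalIntegral.integral_add (hi1.intervalIntegrable _ _) (hi2.intervalIntegrable _ _),
    intervalIntegral.integral_const_mul, intervalIntegral.integral_const_mul,
    intervalIntegral.integral_ofReal, intervalIntegral.integral_ofReal]
end
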